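/- Let V be a real inner product space of dimension 2m ≥ 6 with orthogonal almost complex structure J. For every unit vector x, there exist unit vectors y, z such that {x, y, z} is an antiholomorphic triple: x, y, z are mutually orthogonal and g(x,Jy) = g(y,Jz) = g(z,Jx) = 0. -/
import Mathlib


open RealInnerProductSpace

lemma exists_unit_orthogonal
    {V : Type*} [NormedAddCommGroup V] [InnerProductSpace ℝ V] [FiniteDimensional ℝ V]
    (W : Submodule ℝ V) (h : Module.finrank ℝ W < Module.finrank ℝ V) :
    ∃ v : V, ‖v‖ = 1 ∧ ∀ w ∈ W, ⟪w, v⟫ = 0 := by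
  have h1 : Module.finrank ℝ W + Module.finrank ℝ Wᗮ = Module.finrank ℝ V :=
    Submodule.finrank_add_finrank_orthogonal W
  have h2 : 0 < Module.finrank ℝ Wᗮ := by omega
  have hbot : Wᗮ ≠ ⊥ := by
    intro hb
    rw [hb, finrank_bot] at h2
    omega
  obtain ⟨v, hv, hvne⟩ := Submodule.exists_mem_ne_zero_of_ne_bot hbot
  refine ⟨‖v‖⁻¹ • v, ?_, ?_⟩
  · simp [norm_smul, abs_of_nonneg, inv_mul_cancel₀ (norm_ne_zero_iff.mpr hvne)]
  · intro w hw
    have := (Submodule.mem_orthogonal Wᗮ w).mp ?_ v hv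
    · rw [real_inner_smul_right]
      rw [real_inner_comm] at this
      simp [this]
    · exact (Submodule.le_orthogonal_orthogonal W) hw

theorem exists_antiholomorphic_triple
    {V : Type*} [NormedAddCommGroup V] [InnerProductSpace ℝ V] [FiniteDimensional ℝ V]
    (m : ℕ) (hdim : Module.finrank ℝ V = 2 * m) (hm : 6 ≤ 2 * m)
    (J : V →ₗ[ℝ] V) (hJ2 : ∀ x, J (J x) = -x) (hJg : ∀ x y, ⟪J x, J y⟫ = ⟪x, y⟫) :
    ∀ x : V, ‖x‖ = 1 → ∃ y z : V, ‖y‖ = 1 ∧ ‖z‖ = 1 ∧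
      ⟪x, y⟫ = 0 ∧ ⟪y, z⟫ = 0 ∧ ⟪z, x⟫ = 0 ∧
      ⟪x, J y⟫ = 0 ∧ ⟪y, J z⟫ = 0 ∧ ⟪z, J x⟫ = 0 := by
  intro x hx
  -- first vector
  set W1 : Submodule ℝ V := Submodule.span ℝ {x, J x} with hW1
  have hW1lt : Module.finrank ℝ W1 < Module.finrank ℝ V := by
    classical
    have h1 : W1 = Submodule.span ℝ (({x, J x} : Finset V) : Set V) := by simp [hW1]
    have := finrank_span_finset_le_card (R := ℝ) ({x, J x} : Finset V)
    have hc : ({x, J x} : Finset V).card ≤ 2 :=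
      (Finset.card_insert_le _ _).trans (by simp)
    rw [h1]
    simp only [Set.finrank] at this
    omega
  obtain ⟨y, hy1, hy2⟩ := exists_unit_orthogonal W1 hW1lt
  have hxy : ⟪x, y⟫ = 0 := hy2 x (Submodule.subset_span (by simp))
  have hJxy : ⟪J x, y⟫ = 0 := hy2 (J x) (Submodule.subset_span (by simp))
  -- second vector
  set W2 : Submodule ℝ V := Submodule.span ℝ {x, J x, y, J y} with hW2
  have hW2lt : Module.finrank ℝ W2 < Module.finrank ℝ V := by
    classical
    have h1 : W2 = Submodule.span ℝ (({x, J x, y, J y} : Finset V) : Set V) := by simp [hW2]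
    have := finrank_span_finset_le_card (R := ℝ) ({x, J x, y, J y} : Finset V)
    have hc : ({x, J x, y, J y} : Finset V).card ≤ 4 := by
      refine (Finset.card_insert_le _ _).trans ?_
      have h2 := Finset.card_insert_le (J x) ({y, J y} : Finset V)
      have h3 := Finset.card_insert_le y ({J y} : Finset V)
      simp only [Finset.card_singleton] at *
      omega
    rw [h1]
    simp only [Set.finrank] at this
    omega
  obtain ⟨z, hz1, hz2⟩ := exists_unit_orthogonal W2 hW2lt
  have hxz : ⟪x, z⟫ = 0 := hz2 x (Submodule.subset_span (by simp))
  have hJxz : ⟪J x, z⟫ = 0 := hz2 (J x) (Submodule.subset_span (by simp))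
  have hyz : ⟪y, z⟫ = 0 := hz2 y (Submodule.subset_span (by simp))
  have hJyz : ⟪J y, z⟫ = 0 := hz2 (J y) (Submodule.subset_span (by simp))
  refine ⟨y, z, hy1, hz1, hxy, hyz, real_inner_comm z x ▸ hxz, ?_, ?_, real_inner_comm z (J x) ▸ hJxz⟩
  · have : ⟪J x, J (J y)⟫ = ⟪x, J y⟫ := hJg x (J y)
    rw [hJ2, inner_neg_right, hJxy] at this
    linarith
  · have : ⟪J y, J (J z)⟫ = ⟪y, J z⟫ := hJg y (J z)
    rw [hJ2, inner_neg_right, hJyz] at this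
    linarith
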